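/- The positive integer solutions of 10ã² − a² = 1 are exactly the pairs (a, ã) with a = (1/2)((3+√10)^(2n+1) + (3−√10)^(2n+1)) and ã = (√10/20)((3+√10)^(2n+1) − (3−√10)^(2n+1)) for some n ∈ ℕ; in particular the smallest solutions are (a, ã) = (3,1), (117,37), (4443,1405). -/
import Mathlib

private def pseq : ℕ → ℤ × ℤ
  | 0 => (3, 1)
  | k+1 => (3 * (pseq k).1 + 10 * (pseq k).2, (pseq k).1 + 3 * (pseq k).2)

private lemma pseq_norm : ∀ k, ((pseq k).1)^2 - 10 * ((pseq k).2)^2 = (-1)^(k+1)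
  | 0 => by simp [pseq]
  | k+1 => by
      have ih := pseq_norm k
      simp only [pseq, pow_succ]
      ring_nf
      ring_nf at ih
      nlinarith [ih]

private lemma pseq_real (k : ℕ) :
    ((pseq k).1 : ℝ) + (pseq k).2 * Real.sqrt 10 = (3 + Real.sqrt 10)^(k+1) ∧
    ((pseq k).1 : ℝ) - (pseq k).2 * Real.sqrt 10 = (3 - Real.sqrt 10)^(k+1) := by
  have h10 : Real.sqrt 10 ^ 2 = 10 := Real.sq_sqrt (by norm_num)
  induction k with
  | zero => simp only [pseq]; push_cast; constructor <;> ring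
  | succ k ih =>
      obtain ⟨h1, h2⟩ := ih
      constructor
      · rw [pow_succ, ← h1]; simp only [pseq]; push_cast
        linear_combination (-((pseq k).2 : ℝ)) * h10
      · rw [pow_succ, ← h2]; simp only [pseq]; push_cast
        linear_combination (-((pseq k).2 : ℝ)) * h10

private lemma descent : ∀ N : ℕ, ∀ a b : ℤ, 0 < a → 0 < b → b.toNat ≤ N →
    (a^2 - 10*b^2 = 1 ∨ a^2 - 10*b^2 = -1) → ∃ k, a = (pseq k).1 ∧ b = (pseq k).2 := by
  intro N
  induction N with
  | zero => intro a b ha hb hN _; omega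
  | succ N ih =>
      intro a b ha hb hN heq
      by_cases hab : a ≤ 3 * b
      · have hmul : 0 ≤ (3*b-a)*(3*b+a) := mul_nonneg (by linarith) (by linarith)
        have hb1 : b = 1 := by
          rcases heq with h | h
          · exfalso; nlinarith
          · have : b ≤ 1 := by nlinarith
            omega
        subst hb1
        have ha3 : a = 3 := by
          have hub : a ≤ 3 := by rcases heq with h | h <;> nlinarith [sq_nonneg (a-4)]
          interval_cases a
          · norm_num at heq
          · norm_num at heq
          · rfl
        exact ⟨0, by simp [pseq, ha3]⟩
      · push_neg at hab
        set a' := 10 * b - 3 * a with ha'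
        set b' := a - 3 * b with hb'
        have hb'pos : 0 < b' := by omega
        have hb'lt : b' < b := by
          rcases heq with h | h <;> nlinarith
        have ha'pos : 0 < a' := by
          rcases heq with h | h <;> nlinarith
        have heq' : a'^2 - 10*b'^2 = 1 ∨ a'^2 - 10*b'^2 = -1 := by
          rcases heq with h | h
          · right; nlinarith
          · left; nlinarith
        obtain ⟨k, hk1, hk2⟩ := ih a' b' ha'pos hb'pos (by omega) heq'
        refine ⟨k+1, ?_, ?_⟩ <;> simp [pseq, ← hk1, ← hk2] <;> omega

/-- Positive integer solutions of the negative-Pell-type equation `10ã² - a² = 1`. -/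
theorem stmt11 :
    (∀ a at' : ℤ, 0 < a → 0 < at' →
      (10 * at'^2 - a^2 = 1 ↔
        ∃ n : ℕ, (a : ℝ) = (1/2) * ((3 + Real.sqrt 10)^(2*n+1) + (3 - Real.sqrt 10)^(2*n+1))
          ∧ (at' : ℝ) = (Real.sqrt 10/20) * ((3 + Real.sqrt 10)^(2*n+1) - (3 - Real.sqrt 10)^(2*n+1))))
    ∧ 10 * (1 : ℤ)^2 - 3^2 = 1 ∧ 10 * (37 : ℤ)^2 - 117^2 = 1 ∧ 10 * (1405 : ℤ)^2 - 4443^2 = 1 := by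
  have h10 : Real.sqrt 10 ^ 2 = 10 := Real.sq_sqrt (by norm_num)
  refine ⟨?_, by norm_num, by norm_num, by norm_num⟩
  intro a at' ha hat
  constructor
  · intro heq
    obtain ⟨k, hk1, hk2⟩ := descent at'.toNat a at' ha hat le_rfl (Or.inr (by linarith))
    have hnorm := pseq_norm k
    have hkeven : Even k := by
      rcases Nat.even_or_odd k with h | h
      · exact h
      · exfalso
        obtain ⟨m, hm⟩ := h
        rw [← hk1, ← hk2] at hnorm
        rw [hm] at hnorm
        have h1 : ((-1 : ℤ))^(2*m+1+1) = 1 := by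
          rw [show 2*m+1+1 = 2*(m+1) by ring, pow_mul]; norm_num
        rw [h1] at hnorm
        linarith
    obtain ⟨n, hn⟩ := hkeven
    refine ⟨n, ?_, ?_⟩
    · obtain ⟨h1, h2⟩ := pseq_real k
      rw [show 2*n+1 = k+1 by omega, ← h1, ← h2, hk1]
      ring
    · obtain ⟨h1, h2⟩ := pseq_real k
      rw [show 2*n+1 = k+1 by omega, ← h1, ← h2, hk2]
      linear_combination (-((pseq k).2 : ℝ)/10) * h10
  · rintro ⟨n, hA, hB⟩
    obtain ⟨h1, h2⟩ := pseq_real (2*n)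
    have hA' : a = (pseq (2*n)).1 := by
      have : (a : ℝ) = ((pseq (2*n)).1 : ℝ) := by
        rw [hA, show 2*n+1 = 2*n+1 from rfl, ← h1, ← h2]; ring
      exact_mod_cast this
    have hB' : at' = (pseq (2*n)).2 := by
      have : (at' : ℝ) = ((pseq (2*n)).2 : ℝ) := by
        rw [hB, ← h1, ← h2]
        linear_combination (((pseq (2*n)).2 : ℝ)/10) * h10
      exact_mod_cast this
    have hnorm := pseq_norm (2*n)
    have : ((-1 : ℤ))^(2*n+1) = -1 := by
      rw [pow_succ, pow_mul]; norm_num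
    rw [this, ← hA', ← hB'] at hnorm
    linarith
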